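/- Let A be a real n₁ × n₂ matrix with reduced SVD A = U Σ Vᵀ, define P_T as the projection onto the tangent space at A and P_T^⊥ = I − P_T. Then for any n₁ × n₂ matrix C with P_T(C) = 0 (i.e., C = P_T^⊥(C)), one has ‖A + C‖_* = ‖A‖_* + ‖C‖_*. -/

import Mathlib

open Matrix

theorem Matrix.isHermitian_transpose_mul_self {m n : Type*} [Fintype m] (A : Matrix m n ℝ) :
    (Aᵀ * A).IsHermitian := by
  simpa [conjTranspose_eq_transpose_of_trivial] using isHermitian_conjTranspose_mul_self A

noncomputable def singVals {m n : ℕ} (A : Matrix (Fin m) (Fin n) ℝ) : Fin n → ℝ :=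
  fun i => Real.sqrt ((Matrix.isHermitian_transpose_mul_self A).eigenvalues i)

noncomputable def nuclearNorm {m n : ℕ} (A : Matrix (Fin m) (Fin n) ℝ) : ℝ :=
  ∑ i, singVals A i

noncomputable def frobNorm {m n : ℕ} (A : Matrix (Fin m) (Fin n) ℝ) : ℝ :=
  Real.sqrt (∑ i, ∑ j, (A i j) ^ 2)


/-- Projection onto the tangent space of the set of low-rank matrices at a
matrix with reduced SVD given by column-orthonormal `U` and `V`. -/
def PT {n₁ n₂ r : ℕ} (U : Matrix (Fin n₁) (Fin r) ℝ) (V : Matrix (Fin n₂) (Fin r) ℝ)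
    (B : Matrix (Fin n₁) (Fin n₂) ℝ) : Matrix (Fin n₁) (Fin n₂) ℝ :=
  U * Uᵀ * B + B * (V * Vᵀ) - U * Uᵀ * B * (V * Vᵀ)

open scoped MatrixOrder in
noncomputable def Matrix.PosSemidef.sqrt {n : ℕ} {M : Matrix (Fin n) (Fin n) ℝ}
    (_hM : M.PosSemidef) : Matrix (Fin n) (Fin n) ℝ := CFC.sqrt M

open scoped MatrixOrder in
lemma Matrix.PosSemidef.posSemidef_sqrt {n : ℕ} {M : Matrix (Fin n) (Fin n) ℝ}
    (hM : M.PosSemidef) : hM.sqrt.PosSemidef :=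
  Matrix.nonneg_iff_posSemidef.mp (CFC.sqrt_nonneg M)

open scoped MatrixOrder in
lemma Matrix.PosSemidef.sqrt_mul_self {n : ℕ} {M : Matrix (Fin n) (Fin n) ℝ}
    (hM : M.PosSemidef) : hM.sqrt * hM.sqrt = M :=
  CFC.sqrt_mul_sqrt_self M hM.nonneg

open scoped MatrixOrder in
lemma Matrix.PosSemidef.eq_sqrt_of_sq_eq {n : ℕ} {B M : Matrix (Fin n) (Fin n) ℝ}
    (hB : B.PosSemidef) (hM : M.PosSemidef) (h : B ^ 2 = M) : B = hM.sqrt :=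
  (CFC.sqrt_unique (by rw [← sq]; exact h) hB.nonneg).symm

open scoped MatrixOrder in
lemma trace_sqrt_eq {n : ℕ} {M : Matrix (Fin n) (Fin n) ℝ} (hM : M.PosSemidef) :
    hM.sqrt.trace = ∑ i, Real.sqrt (hM.1.eigenvalues i) := by
  rw [Matrix.PosSemidef.sqrt, CFC.sqrt_eq_cfc, cfc_nnreal_eq_real _ M, hM.1.cfc_eq,
    IsHermitian.cfc, Unitary.conjStarAlgAut_apply, trace_mul_cycle,
    Unitary.coe_star_mul_self hM.1.eigenvectorUnitary, one_mul, trace_diagonal]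
  refine Finset.sum_congr rfl fun i _ => ?_
  simp [Real.coe_sqrt, hM.eigenvalues_nonneg i]

lemma psd_tmul {m n : ℕ} (A : Matrix (Fin m) (Fin n) ℝ) : (Aᵀ * A).PosSemidef := by
  simpa using Matrix.posSemidef_conjTranspose_mul_self A

lemma nuclearNorm_eq_trace {m n : ℕ} (A : Matrix (Fin m) (Fin n) ℝ) :
    nuclearNorm A = (psd_tmul A).sqrt.trace := by
  rw [trace_sqrt_eq]; rfl

/-- Decomposability of the nuclear norm: if `P_T C = 0` then
`‖A + C‖_* = ‖A‖_* + ‖C‖_*`. -/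
theorem stmt14 {n₁ n₂ r : ℕ} (A : Matrix (Fin n₁) (Fin n₂) ℝ)
    (U : Matrix (Fin n₁) (Fin r) ℝ) (V : Matrix (Fin n₂) (Fin r) ℝ)
    (σ : Fin r → ℝ) (hσ : ∀ i, 0 < σ i)
    (hU : Uᵀ * U = 1) (hV : Vᵀ * V = 1)
    (hA : A = U * Matrix.diagonal σ * Vᵀ)
    (C : Matrix (Fin n₁) (Fin n₂) ℝ) (hC : PT U V C = 0) :
    nuclearNorm (A + C) = nuclearNorm A + nuclearNorm C := by
  -- Step 1: Uᵀ C = 0 and C V = 0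
  have hUC : Uᵀ * C = 0 := by
    have h1 := congrArg (fun M => Uᵀ * M) hC
    simp only [PT, Matrix.mul_add, Matrix.mul_sub, ← Matrix.mul_assoc, hU, one_mul,
      Matrix.mul_zero] at h1
    simpa using h1
  have hCV : C * V = 0 := by
    have h1 := congrArg (fun M => M * V) hC
    simp only [PT, Matrix.add_mul, Matrix.sub_mul, Matrix.mul_assoc, hV, mul_one,
      Matrix.zero_mul] at h1
    simpa [← Matrix.mul_assoc] using h1
  -- Step 2: A Cᵀ = 0 and Aᵀ C = 0
  have hVC : Vᵀ * Cᵀ = 0 := by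
    have := congrArg Matrix.transpose hCV
    simpa using this
  have hACt : A * Cᵀ = 0 := by
    rw [hA, Matrix.mul_assoc, hVC, Matrix.mul_zero]
  have hAtC : Aᵀ * C = 0 := by
    rw [hA]
    simp only [Matrix.transpose_mul, Matrix.transpose_transpose]
    rw [Matrix.mul_assoc, Matrix.mul_assoc, hUC, Matrix.mul_zero, Matrix.mul_zero]
  have hCtA : Cᵀ * A = 0 := by
    have := congrArg Matrix.transpose hAtC
    simpa using this
  -- Step 3
  set P := Aᵀ * A with hPdef
  set Q := Cᵀ * C with hQdef
  have hP := psd_tmul A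
  have hQ := psd_tmul C
  have key : (A + C)ᵀ * (A + C) = P + Q := by
    simp only [Matrix.transpose_add, Matrix.add_mul, Matrix.mul_add, hAtC, hCtA]
    abel
  have hPQ : P * Q = 0 := by
    rw [hPdef, hQdef, Matrix.mul_assoc, ← Matrix.mul_assoc A Cᵀ C, hACt,
      Matrix.zero_mul, Matrix.mul_zero]
  -- Step 5/6: sqrt products vanish
  have hPt : hP.sqrt.transpose = hP.sqrt := hP.posSemidef_sqrt.1
  have hQt : hQ.sqrt.transpose = hQ.sqrt := hQ.posSemidef_sqrt.1
  have h1 : hP.sqrt * Q = 0 := by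
    rw [← Matrix.conjTranspose_mul_self_eq_zero (A := hP.sqrt * Q)]
    have ht : (hP.sqrt * Q)ᴴ = Q * hP.sqrt := by
      rw [Matrix.conjTranspose_mul, Matrix.conjTranspose_eq_transpose_of_trivial,
        Matrix.conjTranspose_eq_transpose_of_trivial, hPt]
      rw [show Qᵀ = Q from hQ.1]
    rw [ht, Matrix.mul_assoc, ← Matrix.mul_assoc hP.sqrt hP.sqrt Q, hP.sqrt_mul_self,
      hPQ, Matrix.mul_zero]
  have h2 : hQ.sqrt * hP.sqrt = 0 := by
    rw [← Matrix.conjTranspose_mul_self_eq_zero (A := hQ.sqrt * hP.sqrt)]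
    have ht : (hQ.sqrt * hP.sqrt)ᴴ = hP.sqrt * hQ.sqrt := by
      rw [Matrix.conjTranspose_mul, Matrix.conjTranspose_eq_transpose_of_trivial,
        Matrix.conjTranspose_eq_transpose_of_trivial, hPt, hQt]
    rw [ht, Matrix.mul_assoc, ← Matrix.mul_assoc hQ.sqrt hQ.sqrt hP.sqrt, hQ.sqrt_mul_self,
      ← Matrix.mul_assoc, h1, Matrix.zero_mul]
  have h3 : hP.sqrt * hQ.sqrt = 0 := by
    have := congrArg Matrix.transpose h2
    simpa [Matrix.transpose_mul, hPt, hQt] using this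
  -- Step 7: the sum of sqrts is the sqrt of the sum
  have hS : (hP.sqrt + hQ.sqrt).PosSemidef := hP.posSemidef_sqrt.add hQ.posSemidef_sqrt
  have hM := psd_tmul (A + C)
  have hsq : (hP.sqrt + hQ.sqrt) ^ 2 = (A + C)ᵀ * (A + C) := by
    rw [key, pow_two, Matrix.add_mul, Matrix.mul_add, Matrix.mul_add, h2, h3,
      hP.sqrt_mul_self, hQ.sqrt_mul_self]
    abel
  have hsqrt : hP.sqrt + hQ.sqrt = hM.sqrt := hS.eq_sqrt_of_sq_eq hM hsq
  rw [nuclearNorm_eq_trace, nuclearNorm_eq_trace A, nuclearNorm_eq_trace C,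
    ← hsqrt, Matrix.trace_add]
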